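/- Let X, Y, Z be Banach spaces, G : X ⇉ Y a set-valued mapping, and g : Z × X → Y a continuous function having a partial Fréchet derivative D_x g with respect to the second variable on Z × X which is also continuous. Let p̄ ∈ Z and suppose x̄ ∈ X satisfies 0 ∈ g(p̄, x̄) + G(x̄). Assume the mapping x ↦ g(p̄, x) + G(x) is strongly regular at x̄ for 0 with Lipschitz constant λ > 0. Then for any ε > 0 there exist r_{p̄} > 0, r_{x̄} > 0 and a single-valued mapping s : B(p̄, r_{p̄}) → B(x̄, r_{x̄}) such that s(p̄) = x̄, for each p ∈ B(p̄, r_{p̄}) the point s(p) is the unique solution in B(x̄, r_{x̄}) of the inclusion 0 ∈ g(p, x) + G(x), and ‖s(p′) − s(p)‖ ≤ (λ + ε)‖g(p′, s(p)) − g(p, s(p))‖ for all p, p′ ∈ B(p̄, r_{p̄}). -/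

import Mathlib

open Metric Set Filter

/-- Implicit-function theorem for strongly regular generalized equations
(Theorem 5F.4 of Dontchev-Rockafellar / Theorem 2.1 of Robinson).  -/
theorem stmt1
    {X Y Z : Type*} [NormedAddCommGroup X] [NormedSpace ℝ X] [CompleteSpace X]
    [NormedAddCommGroup Y] [NormedSpace ℝ Y] [CompleteSpace Y]
    [NormedAddCommGroup Z] [NormedSpace ℝ Z] [CompleteSpace Z]
    (G : X → Set Y) (g : Z × X → Y) (Dg : Z → X → X →L[ℝ] Y)
    (hg : Continuous g)
    (hDg : ∀ p x, HasFDerivAt (fun x' => g (p, x')) (Dg p x) x)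
    (hDgc : Continuous fun px : Z × X => Dg px.1 px.2)
    (pbar : Z) (xbar : X) (lam : ℝ) (hlam : 0 < lam)
    (hsol : -g (pbar, xbar) ∈ G xbar)
    (hsr : ∃ rx > (0:ℝ), ∃ ry > (0:ℝ), ∃ s : Y → X,
      (∀ z ∈ ball (0:Y) ry,
        ({y : X | z - (g (pbar, xbar) + Dg pbar xbar (y - xbar)) ∈ G y} ∩ ball xbar rx)
            = {s z} ∧ s z ∈ ball xbar rx) ∧
      (∀ u ∈ ball (0:Y) ry, ∀ v ∈ ball (0:Y) ry, ‖s u - s v‖ ≤ lam * ‖u - v‖)) :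
    ∀ ε > (0:ℝ), ∃ rp > (0:ℝ), ∃ rx > (0:ℝ), ∃ s : Z → X,
      s pbar = xbar ∧
      (∀ p ∈ ball pbar rp, s p ∈ ball xbar rx ∧ -g (p, s p) ∈ G (s p) ∧
        ∀ x ∈ ball xbar rx, -g (p, x) ∈ G x → x = s p) ∧
      (∀ p ∈ ball pbar rp, ∀ p' ∈ ball pbar rp,
        ‖s p' - s p‖ ≤ (lam + ε) * ‖g (p', s p) - g (p, s p)‖) := by
  intro ε hε
  obtain ⟨rx, hrx, ry, hry, σ, hσ1, hσ2⟩ := hsr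
  have hle : (0:ℝ) < lam + ε := by linarith
  obtain ⟨Kr, μ, hKr0, hKr1, hμ0, hlamμ, hKrε⟩ :
      ∃ Kr μ : ℝ, 0 < Kr ∧ Kr < 1 ∧ 0 < μ ∧ lam * μ = Kr ∧ Kr * (lam + ε) = ε :=
    ⟨ε / (lam + ε), ε / (lam + ε) / lam, div_pos hε hle,
      (div_lt_one hle).2 (by linarith), by positivity, by field_simp,
      div_mul_cancel₀ ε hle.ne'⟩
  -- σ 0 = xbar
  have hσ0 : σ 0 = xbar := by
    obtain ⟨hS, -⟩ := hσ1 0 (mem_ball_self hry)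
    have hx : xbar ∈ ({y : X | (0:Y) - (g (pbar, xbar) + Dg pbar xbar (y - xbar)) ∈ G y}
        ∩ ball xbar rx) := by
      constructor
      · simp only [mem_setOf_eq, sub_self, map_zero, add_zero, zero_sub]
        exact hsol
      · exact mem_ball_self hrx
    rw [hS] at hx
    exact hx.symm
  -- continuity of Dg at (pbar, xbar)
  obtain ⟨δ1, hδ1, hDgδ⟩ : ∃ δ1 > 0, ∀ p x, dist p pbar < δ1 → dist x xbar < δ1 →
      ‖Dg p x - Dg pbar xbar‖ < μ := by
    have := Metric.continuousAt_iff.1 (hDgc.continuousAt (x := (pbar, xbar))) μ hμ0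
    obtain ⟨δ, hδ, h⟩ := this
    refine ⟨δ, hδ, fun p x hp hx => ?_⟩
    have hd : dist ((p, x) : Z × X) (pbar, xbar) < δ := by
      rw [Prod.dist_eq]; exact max_lt hp hx
    have := h hd
    rwa [dist_eq_norm] at this
  -- choose radius a
  obtain ⟨a, ha0, ha_rx, ha_δ1, ha_ry⟩ :
      ∃ a : ℝ, 0 < a ∧ a < rx ∧ a < δ1 ∧ μ * a < ry / 2 := by
    refine ⟨min (δ1 / 2) (min (rx / 2) (ry / (4 * (μ + 1)))),
      lt_min (by linarith) (lt_min (by linarith) (by positivity)), ?_, ?_, ?_⟩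
    · exact (((min_le_right _ _).trans (min_le_left _ _))).trans_lt (by linarith)
    · exact (min_le_left _ _).trans_lt (by linarith)
    · have h1 : min (δ1 / 2) (min (rx / 2) (ry / (4 * (μ + 1)))) ≤ ry / (4 * (μ + 1)) :=
        (min_le_right _ _).trans (min_le_right _ _)
      have h2 : μ * (ry / (4 * (μ + 1))) < ry / 2 := by
        rw [← mul_div_assoc, div_lt_div_iff₀ (by positivity) (by norm_num : (0:ℝ) < 2)]
        nlinarith
      calc μ * min (δ1 / 2) (min (rx / 2) (ry / (4 * (μ + 1))))
          ≤ μ * (ry / (4 * (μ + 1))) := mul_le_mul_of_nonneg_left h1 hμ0.le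
        _ < ry / 2 := h2
  -- choose η
  obtain ⟨η, hη0, hη_ry, hη_lt⟩ :
      ∃ η : ℝ, 0 < η ∧ η < ry / 2 ∧ lam * (μ * a + η) < a := by
    refine ⟨min (ry / 4) (a * (1 - Kr) / (2 * lam)), ?_, ?_, ?_⟩
    · refine lt_min (by linarith) ?_
      have h1Kr : 0 < 1 - Kr := by linarith
      positivity
    · exact (min_le_left _ _).trans_lt (by linarith)
    · have hb : min (ry / 4) (a * (1 - Kr) / (2 * lam)) ≤ a * (1 - Kr) / (2 * lam) :=
        min_le_right _ _
      rw [le_div_iff₀ (by positivity)] at hb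
      have h3 : lam * (μ * a) = Kr * a := by rw [← hlamμ]; ring
      have h4 : Kr * a < 1 * a := mul_lt_mul_of_pos_right hKr1 ha0
      nlinarith
  -- continuity of g(·, xbar) at pbar
  obtain ⟨rp0, hrp0, hgδ⟩ : ∃ rp0 > 0, ∀ p, dist p pbar < rp0 →
      ‖g (p, xbar) - g (pbar, xbar)‖ < η := by
    have hc : Continuous fun p : Z => g (p, xbar) :=
      hg.comp (continuous_id.prodMk continuous_const)
    obtain ⟨δ, hδ, h⟩ := Metric.continuousAt_iff.1 hc.continuousAt η hη0
    exact ⟨δ, hδ, fun p hp => by have := h hp; rwa [dist_eq_norm] at this⟩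
  obtain ⟨rp, hrp, hrp_0, hrp_δ1⟩ : ∃ rp : ℝ, 0 < rp ∧ rp ≤ rp0 ∧ rp ≤ δ1 :=
    ⟨min rp0 δ1, lt_min hrp0 hδ1, min_le_left _ _, min_le_right _ _⟩
  -- the error function
  set e : Z → X → Y := fun p y => g (pbar, xbar) + Dg pbar xbar (y - xbar) - g (p, y)
    with he_def
  -- Lipschitz estimate for e
  have heLip : ∀ p ∈ ball pbar rp, ∀ y ∈ closedBall xbar a, ∀ y' ∈ closedBall xbar a,
      ‖e p y - e p y'‖ ≤ μ * ‖y - y'‖ := by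
    intro p hp y hy y' hy'
    have key : ∀ x ∈ closedBall xbar a,
        HasFDerivWithinAt (e p) (Dg pbar xbar - Dg p x) (closedBall xbar a) x := by
      intro x hx
      have h1 : HasFDerivAt (fun y : X => g (pbar, xbar) + Dg pbar xbar (y - xbar) - g (p, y))
          (Dg pbar xbar - Dg p x) x := by
        have h2 : HasFDerivAt (fun y : X => Dg pbar xbar (y - xbar)) (Dg pbar xbar) x := by
          have := ((Dg pbar xbar).hasFDerivAt (x := x)).sub_const (Dg pbar xbar xbar)
          simpa [map_sub] using this
        exact ((h2.const_add (g (pbar, xbar))).sub (hDg p x))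
      exact h1.hasFDerivWithinAt
    have bound : ∀ x ∈ closedBall xbar a, ‖Dg pbar xbar - Dg p x‖ ≤ μ := by
      intro x hx
      have hpd : dist p pbar < δ1 := lt_of_lt_of_le (mem_ball.1 hp) hrp_δ1
      have hxd : dist x xbar < δ1 := lt_of_le_of_lt (mem_closedBall.1 hx) ha_δ1
      have := hDgδ p x hpd hxd
      rw [← norm_neg]
      simpa [neg_sub] using this.le
    exact (convex_closedBall xbar a).norm_image_sub_le_of_norm_hasFDerivWithin_le
      key bound hy' hy
  -- smallness of e
  have heBound : ∀ p ∈ ball pbar rp, ∀ y ∈ closedBall xbar a, ‖e p y‖ ≤ μ * a + η := by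
    intro p hp y hy
    have h1 : e p xbar = g (pbar, xbar) - g (p, xbar) := by
      simp [he_def]
    have h2 : ‖e p xbar‖ ≤ η := by
      rw [h1, ← norm_neg, neg_sub]
      exact (hgδ p (lt_of_lt_of_le (mem_ball.1 hp) hrp_0)).le
    have h3 : ‖e p y - e p xbar‖ ≤ μ * ‖y - xbar‖ :=
      heLip p hp y hy xbar (mem_closedBall_self ha0.le)
    have h4 : ‖y - xbar‖ ≤ a := by rw [← dist_eq_norm]; exact mem_closedBall.1 hy
    have h5 : ‖e p y‖ ≤ ‖e p y - e p xbar‖ + ‖e p xbar‖ := by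
      simpa using norm_add_le (e p y - e p xbar) (e p xbar)
    nlinarith
  have heBall : ∀ p ∈ ball pbar rp, ∀ y ∈ closedBall xbar a, e p y ∈ ball (0:Y) ry := by
    intro p hp y hy
    rw [mem_ball, dist_zero_right]
    have := heBound p hp y hy
    linarith
  -- the fixed point map
  set f : Z → X → X := fun p y => σ (e p y) with hf_def
  have hmaps : ∀ p ∈ ball pbar rp, ∀ y ∈ closedBall xbar a, f p y ∈ ball xbar a := by
    intro p hp y hy
    rw [mem_ball, dist_eq_norm]
    have h1 : ‖σ (e p y) - σ 0‖ ≤ lam * ‖e p y - 0‖ :=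
      hσ2 _ (heBall p hp y hy) 0 (mem_ball_self hry)
    rw [hσ0, sub_zero] at h1
    have h2 : ‖e p y‖ ≤ μ * a + η := heBound p hp y hy
    calc ‖f p y - xbar‖ ≤ lam * ‖e p y‖ := h1
      _ ≤ lam * (μ * a + η) := mul_le_mul_of_nonneg_left h2 hlam.le
      _ < a := hη_lt
  have hcontr : ∀ p ∈ ball pbar rp, ∀ y ∈ closedBall xbar a, ∀ y' ∈ closedBall xbar a,
      ‖f p y - f p y'‖ ≤ Kr * ‖y - y'‖ := by
    intro p hp y hy y' hy'
    have h1 : ‖σ (e p y) - σ (e p y')‖ ≤ lam * ‖e p y - e p y'‖ :=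
      hσ2 _ (heBall p hp y hy) _ (heBall p hp y' hy')
    calc ‖f p y - f p y'‖ ≤ lam * ‖e p y - e p y'‖ := h1
      _ ≤ lam * (μ * ‖y - y'‖) := mul_le_mul_of_nonneg_left (heLip p hp y hy y' hy') hlam.le
      _ = Kr * ‖y - y'‖ := by rw [← hlamμ]; ring
  -- equivalence between solving and fixed points
  have hequiv : ∀ p ∈ ball pbar rp, ∀ x ∈ closedBall xbar a,
      (-g (p, x) ∈ G x ↔ f p x = x) := by
    intro p hp x hx
    obtain ⟨hS, -⟩ := hσ1 (e p x) (heBall p hp x hx)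
    have hxball : x ∈ ball xbar rx := lt_of_le_of_lt (mem_closedBall.1 hx) ha_rx
    have hcompute : e p x - (g (pbar, xbar) + Dg pbar xbar (x - xbar)) = -g (p, x) := by
      simp [he_def]
    constructor
    · intro hGx
      have hxS : x ∈ ({y : X | e p x - (g (pbar, xbar) + Dg pbar xbar (y - xbar)) ∈ G y}
          ∩ ball xbar rx) := ⟨by rw [mem_setOf_eq, hcompute]; exact hGx, hxball⟩
      rw [hS] at hxS
      exact hxS.symm
    · intro hfx
      have hmem : σ (e p x) ∈ ({y : X | e p x - (g (pbar, xbar)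
          + Dg pbar xbar (y - xbar)) ∈ G y} ∩ ball xbar rx) := by rw [hS]; rfl
      rw [show σ (e p x) = x from hfx] at hmem
      have := hmem.1
      rwa [mem_setOf_eq, hcompute] at this
  -- existence and uniqueness of fixed points
  have key : ∀ p ∈ ball pbar rp, ∃ x, x ∈ ball xbar a ∧ f p x = x ∧
      ∀ y ∈ closedBall xbar a, f p y = y → y = x := by
    intro p hp
    have hsc : IsComplete (closedBall xbar a) := Metric.isClosed_closedBall.isComplete
    have hsf : MapsTo (f p) (closedBall xbar a) (closedBall xbar a) := fun y hy =>
      ball_subset_closedBall (hmaps p hp y hy)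
    have hcw : ContractingWith ⟨Kr, hKr0.le⟩ (hsf.restrict (f p) _ _) := by
      refine ⟨?_, LipschitzWith.of_dist_le_mul ?_⟩
      · exact_mod_cast hKr1
      · rintro ⟨y, hy⟩ ⟨y', hy'⟩
        show dist (f p y) (f p y') ≤ Kr * dist y y'
        rw [dist_eq_norm, dist_eq_norm]
        exact hcontr p hp y hy y' hy'
    obtain ⟨x, hxmem, hxfix, -, -⟩ := hcw.exists_fixedPoint' hsc hsf
      (mem_closedBall_self ha0.le) (edist_ne_top _ _)
    refine ⟨x, ?_, hxfix, ?_⟩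
    · rw [← hxfix]; exact hmaps p hp x hxmem
    · intro y hy hyfix
      by_contra hne
      have hlt : ‖y - x‖ ≤ Kr * ‖y - x‖ := by
        calc ‖y - x‖ = ‖f p y - f p x‖ := by rw [hyfix, hxfix]
          _ ≤ Kr * ‖y - x‖ := hcontr p hp y hy x hxmem
      have hpos : 0 < ‖y - x‖ := by
        rw [norm_pos_iff, sub_ne_zero]; exact hne
      nlinarith
  choose s' hs'ball hs'fix hs'uniq using fun p (hp : p ∈ ball pbar rp) => key p hp
  classical
  refine ⟨rp, hrp, a, ha0, fun p => if hp : p ∈ ball pbar rp then s' p hp else xbar, ?_, ?_, ?_⟩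
  · -- s pbar = xbar
    have hp : pbar ∈ ball pbar rp := mem_ball_self hrp
    simp only [dif_pos hp]
    have hfixbar : f pbar xbar = xbar := by
      have he0 : e pbar xbar = 0 := by simp [he_def]
      rw [hf_def]; simp only [he0]; exact hσ0
    exact (hs'uniq pbar hp xbar (mem_closedBall_self ha0.le) hfixbar).symm
  · intro p hp
    simp only [dif_pos hp]
    have hb := hs'ball p hp
    have hcb : s' p hp ∈ closedBall xbar a := ball_subset_closedBall hb
    refine ⟨hb, (hequiv p hp _ hcb).2 (hs'fix p hp), ?_⟩
    intro x hx hGx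
    exact hs'uniq p hp x (ball_subset_closedBall hx)
      ((hequiv p hp x (ball_subset_closedBall hx)).1 hGx)
  · intro p hp p' hp'
    simp only [dif_pos hp, dif_pos hp']
    have hucb : s' p hp ∈ closedBall xbar a := ball_subset_closedBall (hs'ball p hp)
    have hvcb : s' p' hp' ∈ closedBall xbar a := ball_subset_closedBall (hs'ball p' hp')
    set u := s' p hp
    set v := s' p' hp'
    have hufix : σ (e p u) = u := hs'fix p hp
    have hvfix : σ (e p' v) = v := hs'fix p' hp'
    have h1 : ‖σ (e p' v) - σ (e p u)‖ ≤ lam * ‖e p' v - e p u‖ :=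
      hσ2 _ (heBall p' hp' v hvcb) _ (heBall p hp u hucb)
    rw [hufix, hvfix] at h1
    have h2 : ‖e p' v - e p u‖ ≤ ‖e p' v - e p' u‖ + ‖e p' u - e p u‖ :=
      norm_sub_le_norm_sub_add_norm_sub _ _ _
    have h3 : ‖e p' v - e p' u‖ ≤ μ * ‖v - u‖ := heLip p' hp' v hvcb u hucb
    have h4 : e p' u - e p u = g (p, u) - g (p', u) := by
      simp only [he_def]; abel
    have h5 : ‖e p' u - e p u‖ = ‖g (p', u) - g (p, u)‖ := by
      rw [h4, ← norm_neg, neg_sub]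
    have h6 : ‖v - u‖ ≤ Kr * ‖v - u‖ + lam * ‖g (p', u) - g (p, u)‖ := by
      have hstep : lam * ‖e p' v - e p u‖ ≤
          lam * (μ * ‖v - u‖ + ‖g (p', u) - g (p, u)‖) := by
        apply mul_le_mul_of_nonneg_left _ hlam.le
        calc ‖e p' v - e p u‖ ≤ ‖e p' v - e p' u‖ + ‖e p' u - e p u‖ := h2
          _ ≤ μ * ‖v - u‖ + ‖g (p', u) - g (p, u)‖ := by rw [← h5]; linarith
      calc ‖v - u‖ ≤ lam * ‖e p' v - e p u‖ := h1
        _ ≤ lam * (μ * ‖v - u‖ + ‖g (p', u) - g (p, u)‖) := hstep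
        _ = Kr * ‖v - u‖ + lam * ‖g (p', u) - g (p, u)‖ := by rw [← hlamμ]; ring
    -- conclude
    have hB : (lam + ε) * (1 - Kr) = lam := by
      rw [mul_one_sub, mul_comm (lam + ε) Kr, hKrε]; ring
    have hA : (lam + ε) * ((1 - Kr) * ‖v - u‖) ≤
        (lam + ε) * (lam * ‖g (p', u) - g (p, u)‖) :=
      mul_le_mul_of_nonneg_left (by linarith) hle.le
    have h7 : lam * ‖v - u‖ ≤ lam * ((lam + ε) * ‖g (p', u) - g (p, u)‖) := by
      calc lam * ‖v - u‖ = (lam + ε) * ((1 - Kr) * ‖v - u‖) := by rw [← mul_assoc, hB]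
        _ ≤ (lam + ε) * (lam * ‖g (p', u) - g (p, u)‖) := hA
        _ = lam * ((lam + ε) * ‖g (p', u) - g (p, u)‖) := by ring
    exact le_of_mul_le_mul_left h7 hlam
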